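/- Let B > 0 and let h : (0,∞) → ℝ be a globally defined C¹ solution of h'(t) = h(t)² + K(t), where K : (0,∞) → ℝ satisfies K(t) ≥ −B². Then for all t > 0, −B(e^{2Bt}+1)/(e^{2Bt}−1) ≤ h(t) ≤ B. (In particular h is bounded above by B and bounded below by the explicit hyperbolic-cotangent-type barrier.) -/

import Mathlib

open Real Set Filter Topology

/-- Forward Gronwall-type nonnegativity: if `f a ≥ 0` and `f' ≥ c·f` on `[a,b]`, then `f ≥ 0`. -/
lemma gron_fwd (a b : ℝ) (f f' cf : ℝ → ℝ) (U : Set ℝ) (hU : IsOpen U)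
    (hsub : Icc a b ⊆ U) (hcont : ContinuousOn cf U)
    (hf : ∀ t ∈ Icc a b, HasDerivAt f (f' t) t)
    (hge : ∀ t ∈ Icc a b, cf t * f t ≤ f' t)
    (ha0 : 0 ≤ f a) : ∀ t ∈ Icc a b, 0 ≤ f t := by
  intro t ht
  have hab : a ≤ b := le_trans ht.1 ht.2
  set C : ℝ → ℝ := fun u => ∫ s in a..u, cf s with hCdef
  have hC : ∀ u ∈ Icc a b, HasDerivAt C (cf u) u := by
    intro u hu
    apply intervalIntegral.integral_hasDerivAt_right
    · apply ContinuousOn.intervalIntegrable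
      apply hcont.mono
      intro x hx
      apply hsub
      rw [uIcc_of_le hu.1] at hx
      exact ⟨hx.1, le_trans hx.2 hu.2⟩
    · exact hcont.stronglyMeasurableAtFilter hU u (hsub hu)
    · exact hcont.continuousAt (hU.mem_nhds (hsub hu))
  set E : ℝ → ℝ := fun u => f u * Real.exp (-C u) with hEdef
  have hE : ∀ u ∈ Icc a b, HasDerivAt E ((f' u - cf u * f u) * Real.exp (-C u)) u := by
    intro u hu
    have h1 := (hf u hu).mul (((hC u hu).neg).exp)
    exact h1.congr_deriv (by simp only [Pi.neg_apply]; ring)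
  have hmono : MonotoneOn E (Icc a b) := by
    apply monotoneOn_of_deriv_nonneg (convex_Icc a b)
    · intro u hu; exact (hE u hu).continuousAt.continuousWithinAt
    · intro u hu
      rw [interior_Icc] at hu
      exact ((hE u (Ioo_subset_Icc_self hu)).differentiableAt).differentiableWithinAt
    · intro u hu
      rw [interior_Icc] at hu
      rw [(hE u (Ioo_subset_Icc_self hu)).deriv]
      have h2 := hge u (Ioo_subset_Icc_self hu)
      have := Real.exp_pos (-C u)
      nlinarith
  have hle : E a ≤ E t := hmono (left_mem_Icc.2 hab) ht ht.1
  have hEa : 0 ≤ E a := mul_nonneg ha0 (Real.exp_pos _).le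
  have hEt : 0 ≤ f t * Real.exp (-C t) := le_trans hEa hle
  have := Real.exp_pos (-C t)
  nlinarith

/-- Backward version: if `f b ≥ 0` and `f' ≤ c·f` on `[a,b]`, then `f ≥ 0`. -/
lemma gron_bwd (a b : ℝ) (f f' cf : ℝ → ℝ) (U : Set ℝ) (hU : IsOpen U)
    (hsub : Icc a b ⊆ U) (hcont : ContinuousOn cf U)
    (hf : ∀ t ∈ Icc a b, HasDerivAt f (f' t) t)
    (hle : ∀ t ∈ Icc a b, f' t ≤ cf t * f t)
    (hb0 : 0 ≤ f b) : ∀ t ∈ Icc a b, 0 ≤ f t := by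
  intro t ht
  have hab : a ≤ b := le_trans ht.1 ht.2
  set C : ℝ → ℝ := fun u => ∫ s in a..u, cf s with hCdef
  have hC : ∀ u ∈ Icc a b, HasDerivAt C (cf u) u := by
    intro u hu
    apply intervalIntegral.integral_hasDerivAt_right
    · apply ContinuousOn.intervalIntegrable
      apply hcont.mono
      intro x hx
      apply hsub
      rw [uIcc_of_le hu.1] at hx
      exact ⟨hx.1, le_trans hx.2 hu.2⟩
    · exact hcont.stronglyMeasurableAtFilter hU u (hsub hu)
    · exact hcont.continuousAt (hU.mem_nhds (hsub hu))
  set E : ℝ → ℝ := fun u => f u * Real.exp (-C u) with hEdef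
  have hE : ∀ u ∈ Icc a b, HasDerivAt E ((f' u - cf u * f u) * Real.exp (-C u)) u := by
    intro u hu
    have h1 := (hf u hu).mul (((hC u hu).neg).exp)
    exact h1.congr_deriv (by simp only [Pi.neg_apply]; ring)
  have hmono : AntitoneOn E (Icc a b) := by
    apply antitoneOn_of_deriv_nonpos (convex_Icc a b)
    · intro u hu; exact (hE u hu).continuousAt.continuousWithinAt
    · intro u hu
      rw [interior_Icc] at hu
      exact ((hE u (Ioo_subset_Icc_self hu)).differentiableAt).differentiableWithinAt
    · intro u hu
      rw [interior_Icc] at hu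
      rw [(hE u (Ioo_subset_Icc_self hu)).deriv]
      have h2 := hle u (Ioo_subset_Icc_self hu)
      have := Real.exp_pos (-C u)
      nlinarith
  have hge : E b ≤ E t := hmono ht (right_mem_Icc.2 hab) ht.2
  have hEb : 0 ≤ E b := mul_nonneg hb0 (Real.exp_pos _).le
  have hEt : 0 ≤ f t * Real.exp (-C t) := le_trans hEb hge
  have := Real.exp_pos (-C t)
  nlinarith

lemma barrier_up_deriv (B c t : ℝ) (hB : 0 < B) (ht : t < c) :
    HasDerivAt (fun s => B * (Real.exp (2*B*(c-s)) + 1) / (Real.exp (2*B*(c-s)) - 1))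
      ((B * (Real.exp (2*B*(c-t)) + 1) / (Real.exp (2*B*(c-t)) - 1))^2 - B^2) t := by
  have h1 : HasDerivAt (fun s : ℝ => 2*B*(c-s)) (-(2*B)) t := by
    have h2 := ((hasDerivAt_id t).const_sub c).const_mul (2*B)
    exact h2.congr_deriv (by ring)
  have hy : HasDerivAt (fun s => Real.exp (2*B*(c-s))) (Real.exp (2*B*(c-t)) * -(2*B)) t := h1.exp
  set y := Real.exp (2*B*(c-t)) with hydef
  have hy1 : 1 < y := by
    rw [hydef, show (1:ℝ) = Real.exp 0 by simp]
    exact Real.exp_lt_exp.2 (by nlinarith)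
  have hne : y - 1 ≠ 0 := ne_of_gt (by linarith)
  have hd := ((hy.add_const 1).const_mul B).div (hy.sub_const 1) hne
  refine hd.congr_deriv ?_
  rw [← hydef]
  field_simp
  ring

lemma barrier_dn_deriv (B c t : ℝ) (hB : 0 < B) (ht : c < t) :
    HasDerivAt (fun s => -B * (Real.exp (2*B*(s-c)) + 1) / (Real.exp (2*B*(s-c)) - 1))
      ((-B * (Real.exp (2*B*(t-c)) + 1) / (Real.exp (2*B*(t-c)) - 1))^2 - B^2) t := by
  have h1 : HasDerivAt (fun s : ℝ => 2*B*(s-c)) (2*B) t := by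
    have h2 := ((hasDerivAt_id t).sub_const c).const_mul (2*B)
    exact h2.congr_deriv (by ring)
  have hy : HasDerivAt (fun s => Real.exp (2*B*(s-c))) (Real.exp (2*B*(t-c)) * (2*B)) t := h1.exp
  set y := Real.exp (2*B*(t-c)) with hydef
  have hy1 : 1 < y := by
    rw [hydef, show (1:ℝ) = Real.exp 0 by simp]
    exact Real.exp_lt_exp.2 (by nlinarith)
  have hne : y - 1 ≠ 0 := ne_of_gt (by linarith)
  have hd := ((hy.add_const 1).const_mul (-B)).div (hy.sub_const 1) hne
  refine hd.congr_deriv ?_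
  rw [← hydef]
  field_simp
  ring

lemma upper_bd (B : ℝ) (hB : 0 < B) (K h : ℝ → ℝ)
    (hKB : ∀ t ∈ Ioi (0 : ℝ), K t ≥ -B ^ 2)
    (hh : ∀ t ∈ Ioi (0 : ℝ), HasDerivAt h (h t ^ 2 + K t) t) :
    ∀ t ∈ Ioi (0 : ℝ), h t ≤ B := by
  intro t₀ ht₀
  by_contra hcon
  push_neg at hcon
  set h₀ := h t₀ with hh₀
  have hden : 0 < h₀ - B := by linarith
  set r := (h₀ + B)/(h₀ - B) with hrdef
  have hr1 : 1 < r := by rw [hrdef, lt_div_iff₀ hden]; linarith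
  set c := t₀ + Real.log r / (2*B) with hcdef
  have hlogr : 0 < Real.log r := Real.log_pos hr1
  have htc : t₀ < c := by
    have h9 : 0 < Real.log r/(2*B) := by positivity
    rw [hcdef]; linarith
  have hc0 : c ∈ Ioi (0:ℝ) := lt_trans ht₀ htc
  set g : ℝ → ℝ := fun s => B * (Real.exp (2*B*(c-s)) + 1) / (Real.exp (2*B*(c-s)) - 1) with hgdef
  have hg' : ∀ s ∈ Iio c, HasDerivAt g (g s^2 - B^2) s := fun s hs => barrier_up_deriv B c s hB hs
  have hyt0 : Real.exp (2*B*(c - t₀)) = r := by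
    have h9 : 2*B*(c - t₀) = Real.log r := by rw [hcdef]; field_simp; ring
    rw [h9, Real.exp_log (by linarith : (0:ℝ) < r)]
  have hg0 : g t₀ = h₀ := by
    rw [hgdef]
    simp only
    rw [hyt0, div_eq_iff (by rw [hrdef]; intro h9; apply hden.ne'; field_simp at h9; linarith)]
    rw [hrdef]; field_simp; ring
  have hcomp : ∀ s ∈ Ico t₀ c, g s ≤ h s := by
    intro s hs
    have key := gron_fwd t₀ s (fun u => h u - g u)
      (fun u => (h u^2 + K u) - (g u^2 - B^2)) (fun u => h u + g u)
      (Ioi 0 ∩ Iio c) (isOpen_Ioi.inter isOpen_Iio)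
      (fun x hx => ⟨lt_of_lt_of_le ht₀ hx.1, lt_of_le_of_lt hx.2 hs.2⟩)
      (fun x hx => ((hh x hx.1).continuousAt.add (hg' x hx.2).continuousAt).continuousWithinAt)
      (fun u hu => (hh u (lt_of_lt_of_le ht₀ hu.1)).sub
        (hg' u (lt_of_le_of_lt hu.2 hs.2)))
      (fun u hu => by
        have h9 := hKB u (lt_of_lt_of_le ht₀ hu.1)
        show (h u + g u) * (h u - g u) ≤ h u ^ 2 + K u - (g u ^ 2 - B ^ 2)
        nlinarith)
      (by show (0:ℝ) ≤ h t₀ - g t₀; rw [hg0, hh₀]; simp) s ⟨hs.1, le_refl s⟩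
    have key2 : 0 ≤ h s - g s := key
    linarith
  have hy1 : Tendsto (fun s => Real.exp (2*B*(c-s))) (𝓝[<] c) (𝓝 1) := by
    have hcnt : Continuous fun s : ℝ => Real.exp (2*B*(c-s)) := by continuity
    have h3 := hcnt.tendsto c
    rw [show 2*B*(c-c) = 0 by ring, Real.exp_zero] at h3
    exact h3.mono_left nhdsWithin_le_nhds
  have h2 : Tendsto (fun s => Real.exp (2*B*(c-s)) - 1) (𝓝[<] c) (𝓝[>] 0) := by
    apply tendsto_nhdsWithin_of_tendsto_nhds_of_eventually_within
    · simpa using hy1.sub_const 1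
    · filter_upwards [self_mem_nhdsWithin] with s hs
      have hcs : s < c := hs
      have h8 : (0:ℝ) < 2*B*(c-s) := by nlinarith
      have h9 : (1:ℝ) < Real.exp (2*B*(c-s)) := by
        rw [show (1:ℝ) = Real.exp 0 by simp]
        exact Real.exp_lt_exp.2 h8
      exact mem_Ioi.2 (by linarith)
  have h3 : Tendsto (fun s => (Real.exp (2*B*(c-s)) - 1)⁻¹) (𝓝[<] c) atTop :=
    h2.inv_tendsto_nhdsGT_zero
  have h4 : Tendsto (fun s => B * (Real.exp (2*B*(c-s)) + 1)) (𝓝[<] c) (𝓝 (2*B)) := by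
    have h9 := (hy1.add_const 1).const_mul B
    convert h9 using 2; ring
  have h5 : Tendsto g (𝓝[<] c) atTop := by
    have h9 := Filter.Tendsto.pos_mul_atTop (by positivity) h4 h3
    have h10 : g = fun s => B * (Real.exp (2*B*(c-s)) + 1) * (Real.exp (2*B*(c-s)) - 1)⁻¹ := by
      funext s; rw [hgdef]; simp [div_eq_mul_inv]
    rw [h10]; exact h9
  have hev : ∀ᶠ s in 𝓝[<] c, g s ≤ h s := by
    filter_upwards [self_mem_nhdsWithin,
      eventually_nhdsWithin_of_eventually_nhds (eventually_gt_nhds htc)] with s hs1 hs2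
    exact hcomp s ⟨hs2.le, hs1⟩
  have h6 : Tendsto h (𝓝[<] c) atTop := tendsto_atTop_mono' _ hev h5
  have h7 : Tendsto h (𝓝[<] c) (𝓝 (h c)) :=
    ((hh c hc0).continuousAt.tendsto).mono_left nhdsWithin_le_nhds
  exact not_tendsto_nhds_of_tendsto_atTop h6 (h c) h7

lemma lower_bd (B : ℝ) (hB : 0 < B) (K h : ℝ → ℝ)
    (hKB : ∀ t ∈ Ioi (0 : ℝ), K t ≥ -B ^ 2)
    (hh : ∀ t ∈ Ioi (0 : ℝ), HasDerivAt h (h t ^ 2 + K t) t) :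
    ∀ t ∈ Ioi (0 : ℝ),
      -B * (Real.exp (2 * B * t) + 1) / (Real.exp (2 * B * t) - 1) ≤ h t := by
  intro t₀ ht₀
  by_contra hcon
  push_neg at hcon
  set h₀ := h t₀ with hh₀
  set E := Real.exp (2 * B * t₀) with hEdef
  have ht₀' : (0:ℝ) < t₀ := ht₀
  have hE1 : 1 < E := by
    rw [hEdef, show (1:ℝ) = Real.exp 0 by simp]
    exact Real.exp_lt_exp.2 (by nlinarith)
  have hlt : -B * (E + 1) / (E - 1) < -B := by
    rw [div_lt_iff₀ (by linarith : (0:ℝ) < E - 1)]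
    nlinarith
  have hhB : h₀ < -B := lt_trans hcon hlt
  have hden : h₀ + B < 0 := by linarith
  set z₀ := (h₀ - B)/(h₀ + B) with hzdef
  have hz1 : 1 < z₀ := by
    rw [hzdef, lt_div_iff_of_neg hden]; linarith
  have hzE : z₀ < E := by
    have h9 := (lt_div_iff₀ (by linarith : (0:ℝ) < E - 1)).1 hcon
    rw [hzdef, div_lt_iff_of_neg hden]
    nlinarith
  have hlogz : 0 < Real.log z₀ := Real.log_pos hz1
  set c := t₀ - Real.log z₀ / (2*B) with hcdef
  have hct : c < t₀ := by
    have h9 : 0 < Real.log z₀/(2*B) := by positivity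
    rw [hcdef]; linarith
  have hc0 : (0:ℝ) < c := by
    have h9 : Real.log z₀ < Real.log E := Real.log_lt_log (by linarith) hzE
    rw [hEdef, Real.log_exp] at h9
    have h10 : Real.log z₀ / (2*B) < t₀ := by
      rw [div_lt_iff₀ (by positivity : (0:ℝ) < 2*B)]; nlinarith
    rw [hcdef]; linarith
  set ψ : ℝ → ℝ := fun s => -B * (Real.exp (2*B*(s-c)) + 1) / (Real.exp (2*B*(s-c)) - 1)
    with hψdef
  have hψ' : ∀ s ∈ Ioi c, HasDerivAt ψ (ψ s^2 - B^2) s :=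
    fun s hs => barrier_dn_deriv B c s hB hs
  have hzt0 : Real.exp (2*B*(t₀ - c)) = z₀ := by
    have h9 : 2*B*(t₀ - c) = Real.log z₀ := by rw [hcdef]; field_simp; ring
    rw [h9, Real.exp_log (by linarith : (0:ℝ) < z₀)]
  have hψ0 : ψ t₀ = h₀ := by
    rw [hψdef]
    simp only
    rw [hzt0, div_eq_iff (by intro h9; rw [sub_eq_zero] at h9; rw [← h9] at hz1; linarith)]
    have hne : h₀ + B ≠ 0 := ne_of_lt hden
    rw [hzdef]; field_simp [hne]; ring
  have hcomp : ∀ s ∈ Ioc c t₀, h s ≤ ψ s := by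
    intro s hs
    have key := gron_bwd s t₀ (fun u => ψ u - h u)
      (fun u => (ψ u^2 - B^2) - (h u^2 + K u)) (fun u => ψ u + h u)
      (Ioi c) isOpen_Ioi
      (fun x hx => lt_of_lt_of_le hs.1 hx.1)
      (fun x hx => ((hψ' x hx).continuousAt.add
        (hh x (lt_trans hc0 hx)).continuousAt).continuousWithinAt)
      (fun u hu => (hψ' u (lt_of_lt_of_le hs.1 hu.1)).sub
        (hh u (lt_trans hc0 (lt_of_lt_of_le hs.1 hu.1))))
      (fun u hu => by
        have h9 := hKB u (lt_trans hc0 (lt_of_lt_of_le hs.1 hu.1))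
        show ψ u ^ 2 - B ^ 2 - (h u ^ 2 + K u) ≤ (ψ u + h u) * (ψ u - h u)
        nlinarith)
      (by show (0:ℝ) ≤ ψ t₀ - h t₀; rw [hψ0, hh₀]; simp)
      s ⟨le_refl s, hs.2⟩
    have key2 : 0 ≤ ψ s - h s := key
    linarith
  have hy1 : Tendsto (fun s => Real.exp (2*B*(s-c))) (𝓝[>] c) (𝓝 1) := by
    have hcnt : Continuous fun s : ℝ => Real.exp (2*B*(s-c)) := by continuity
    have h3 := hcnt.tendsto c
    rw [show 2*B*(c-c) = 0 by ring, Real.exp_zero] at h3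
    exact h3.mono_left nhdsWithin_le_nhds
  have h2 : Tendsto (fun s => Real.exp (2*B*(s-c)) - 1) (𝓝[>] c) (𝓝[>] 0) := by
    apply tendsto_nhdsWithin_of_tendsto_nhds_of_eventually_within
    · simpa using hy1.sub_const 1
    · filter_upwards [self_mem_nhdsWithin] with s hs
      have hcs : c < s := hs
      have h8 : (0:ℝ) < 2*B*(s-c) := by nlinarith
      have h9 : (1:ℝ) < Real.exp (2*B*(s-c)) := by
        rw [show (1:ℝ) = Real.exp 0 by simp]
        exact Real.exp_lt_exp.2 h8
      exact mem_Ioi.2 (by linarith)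
  have h3 : Tendsto (fun s => (Real.exp (2*B*(s-c)) - 1)⁻¹) (𝓝[>] c) atTop :=
    h2.inv_tendsto_nhdsGT_zero
  have h4 : Tendsto (fun s => -B * (Real.exp (2*B*(s-c)) + 1)) (𝓝[>] c) (𝓝 (-(2*B))) := by
    have h9 := (hy1.add_const 1).const_mul (-B)
    convert h9 using 2; ring
  have h5 : Tendsto ψ (𝓝[>] c) atBot := by
    have h9 := h4.neg_mul_atTop (by linarith : -(2*B) < 0) h3
    have h10 : ψ = fun s => -B * (Real.exp (2*B*(s-c)) + 1) * (Real.exp (2*B*(s-c)) - 1)⁻¹ := by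
      funext s; rw [hψdef]; simp [div_eq_mul_inv]
    rw [h10]; exact h9
  have hev : ∀ᶠ s in 𝓝[>] c, h s ≤ ψ s := by
    filter_upwards [self_mem_nhdsWithin,
      eventually_nhdsWithin_of_eventually_nhds (eventually_lt_nhds hct)] with s hs1 hs2
    exact hcomp s ⟨hs1, hs2.le⟩
  have h6 : Tendsto h (𝓝[>] c) atBot := tendsto_atBot_mono' _ hev h5
  have h7 : Tendsto h (𝓝[>] c) (𝓝 (h c)) :=
    ((hh c hc0).continuousAt.tendsto).mono_left nhdsWithin_le_nhds
  exact not_tendsto_nhds_of_tendsto_atBot h6 (h c) h7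

/-- If `h : (0,∞) → ℝ` is a globally defined `C¹` solution of `h' = h² + K` with
`K ≥ −B²`, `B > 0`, then `−B(e^{2Bt}+1)/(e^{2Bt}−1) ≤ h(t) ≤ B` for all `t > 0`. -/
theorem stmt4 (B : ℝ) (hB : 0 < B) (K h : ℝ → ℝ)
    (hK : ContinuousOn K (Ioi 0))
    (hKB : ∀ t ∈ Ioi (0 : ℝ), K t ≥ -B ^ 2)
    (hh : ∀ t ∈ Ioi (0 : ℝ), HasDerivAt h (h t ^ 2 + K t) t)
    (hh' : ContinuousOn (fun t => h t ^ 2 + K t) (Ioi 0)) :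
    ∀ t ∈ Ioi (0 : ℝ),
      -B * (Real.exp (2 * B * t) + 1) / (Real.exp (2 * B * t) - 1) ≤ h t ∧ h t ≤ B := fun t ht =>
  ⟨lower_bd B hB K h hKB hh t ht, upper_bd B hB K h hKB hh t ht⟩
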